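/- Let $G$ be a finite group that is almost complete and indecomposable. Then for every positive integer $t$, the group $G^t$ is almost complete. -/

import Mathlib

/-- The subgroup of inner automorphisms of a group `G`. -/
def Inn (G : Type*) [Group G] : Subgroup (MulAut G) :=
  (MulAut.conj : G →* MulAut G).range

instance Inn.normal (G : Type*) [Group G] : (Inn G).Normal := by
  constructor
  rintro x ⟨g, rfl⟩ φ
  refine ⟨φ g, ?_⟩
  ext h
  show MulAut.conj (φ g) h = (φ * MulAut.conj g * φ⁻¹) h
  simp [MulAut.conj_apply, MulAut.mul_apply, map_mul, map_inv]

/-- A group `G` is *almost complete* if it is center-free and the natural surjection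
`Aut(G) → Out(G) = Aut(G)/Inn(G)` admits a group-theoretic section. -/
def AlmostComplete (G : Type*) [Group G] : Prop :=
  Subgroup.center G = ⊥ ∧
    ∃ s : (MulAut G ⧸ Inn G) →* MulAut G,
      (QuotientGroup.mk' (Inn G)).comp s = MonoidHom.id (MulAut G ⧸ Inn G)

/-- A group is *indecomposable* if it cannot be written as a direct product of two
nontrivial groups. -/
def Indecomposable (N : Type u) [Group N] : Prop :=
  ∀ (A B : Type u) (_ : Group A) (_ : Group B),
    Nonempty (N ≃* A × B) → Subsingleton A ∨ Subsingleton B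

namespace AC3

/-! ### Generic lemmas about centerless groups and direct factors -/

/-- Two normal subgroups with trivial intersection commute elementwise. -/
theorem commute_of_normal_inf_bot {H : Type*} [Group H] {K M : Subgroup H}
    (hKn : K.Normal) (hMn : M.Normal) (h : K ⊓ M = ⊥) :
    ∀ k ∈ K, ∀ m ∈ M, k * m = m * k := by
  intro k hk m hm
  have h1 : k * m * k⁻¹ * m⁻¹ ∈ K ⊓ M := by
    rw [Subgroup.mem_inf]
    constructor
    · have : k * ((m * k⁻¹ * m⁻¹)) ∈ K := mul_mem hk (by
        have := hKn.conj_mem k⁻¹ (inv_mem hk) m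
        simpa [mul_assoc] using this)
      simpa [mul_assoc] using this
    · have : (k * m * k⁻¹) * m⁻¹ ∈ M := mul_mem (hMn.conj_mem m hm k) (inv_mem hm)
      simpa [mul_assoc] using this
  rw [h, Subgroup.mem_bot] at h1
  have : k * m * k⁻¹ * m⁻¹ * m * k = m * k := by rw [h1]; group
  calc k * m = k * m * k⁻¹ * m⁻¹ * m * k := by group
    _ = m * k := this

/-- The key "piece extraction" lemma: in a centerless group `H` with an internal direct
decomposition `H = A · B` (elementwise commuting) and an internal direct factor `K` with
complement `M`, the `A`-part of any element of `K` again lies in `K`. -/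
theorem conj_eq_of_comm {H : Type*} [Group H] {x y : H} (h : x * y = y * x) :
    x * y * x⁻¹ = y := by
  rw [h]; group

/-- The key "piece extraction" lemma: in a centerless group `H` with an internal direct
decomposition `H = A · B` (elementwise commuting) and an internal direct factor `K` with
complement `M`, the `A`-part of any element of `K` again lies in `K`. -/
theorem factor_piece {H : Type*} [Group H] (hZ : Subgroup.center H = ⊥)
    {A B K M : Subgroup H} (hKn : K.Normal) (hMn : M.Normal)
    (hABc : ∀ a ∈ A, ∀ b ∈ B, a * b = b * a)
    (hABd : ∀ h : H, ∃ a ∈ A, ∃ b ∈ B, h = a * b)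
    (hKM : K ⊓ M = ⊥)
    (hKMd : ∀ h : H, ∃ k ∈ K, ∃ m ∈ M, h = k * m) :
    ∀ n ∈ K, ∀ a ∈ A, ∀ b ∈ B, n = a * b → a ∈ K := by
  intro n hn a ha b hb hab
  have claim1 : ∀ h : H, a * h * a⁻¹ * h⁻¹ ∈ K := by
    intro h
    obtain ⟨a₁, ha₁, b₁, hb₁, rfl⟩ := hABd h
    have c1 : Commute a b₁ := hABc a ha b₁ hb₁
    have c1' : b₁ * a⁻¹ * b₁⁻¹ = a⁻¹ := conj_eq_of_comm c1.inv_left.symm.eq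
    have c2 : Commute a₁ b := hABc a₁ ha₁ b hb
    have c2' : b * a₁ * b⁻¹ = a₁ := conj_eq_of_comm c2.symm.eq
    have key : a * (a₁ * b₁) * a⁻¹ * (a₁ * b₁)⁻¹ = n * a₁ * n⁻¹ * a₁⁻¹ := by
      have l1 : a * (a₁ * b₁) * a⁻¹ * (a₁ * b₁)⁻¹ = a * a₁ * (b₁ * a⁻¹ * b₁⁻¹) * a₁⁻¹ := by
        group
      have l2 : n * a₁ * n⁻¹ * a₁⁻¹ = a * (b * a₁ * b⁻¹) * a⁻¹ * a₁⁻¹ := by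
        rw [hab]; group
      rw [l1, c1', l2, c2']
    rw [key]
    have : n * (a₁ * n⁻¹ * a₁⁻¹) ∈ K := mul_mem hn (by
      have := hKn.conj_mem n⁻¹ (inv_mem hn) a₁
      simpa [mul_assoc] using this)
    simpa [mul_assoc] using this
  obtain ⟨k, hk, m, hm, hkm⟩ := hKMd a
  have hm1 : m = 1 := by
    have hmc : m ∈ Subgroup.center H := by
      rw [Subgroup.mem_center_iff]
      intro h
      have hmem : m * h * m⁻¹ * h⁻¹ ∈ K ⊓ M := by
        rw [Subgroup.mem_inf]
        constructor
        · have e : m * h * m⁻¹ * h⁻¹ = k⁻¹ * (a * h * a⁻¹ * h⁻¹) * (h * k * h⁻¹) := by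
            rw [show m = k⁻¹ * a by rw [hkm]; group]; group
          rw [e]
          exact mul_mem (mul_mem (inv_mem hk) (claim1 h)) (hKn.conj_mem k hk h)
        · have : m * (h * m⁻¹ * h⁻¹) ∈ M := mul_mem hm (by
            have := hMn.conj_mem m⁻¹ (inv_mem hm) h
            simpa [mul_assoc] using this)
          simpa [mul_assoc] using this
      rw [hKM, Subgroup.mem_bot] at hmem
      have e2 : m * h = h * m := by
        calc m * h = m * h * m⁻¹ * h⁻¹ * (h * m) := by group
          _ = h * m := by rw [hmem, one_mul]
      exact e2.symm
    rw [hZ, Subgroup.mem_bot] at hmc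
    exact hmc
  rw [hkm, hm1, mul_one]
  exact hk

/-! ### Coordinate subgroups of `Fin t → G` -/

section Pi

variable {G : Type*} [Group G] {t : ℕ}

/-- The `i`-th coordinate subgroup of `Fin t → G`. -/
def NN (i : Fin t) : Subgroup (Fin t → G) where
  carrier := {f | ∀ j, j ≠ i → f j = 1}
  one_mem' := fun _ _ => rfl
  mul_mem' := by
    intro f g hf hg j hj
    simp [Pi.mul_apply, hf j hj, hg j hj]
  inv_mem' := by
    intro f hf j hj
    simp [Pi.inv_apply, hf j hj]

/-- The subgroup of functions vanishing at `i`. -/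
def BB (i : Fin t) : Subgroup (Fin t → G) :=
  (Pi.evalMonoidHom (fun _ => G) i).ker

theorem mem_NN {i : Fin t} {f : Fin t → G} : f ∈ (NN i : Subgroup (Fin t → G)) ↔
    ∀ j, j ≠ i → f j = 1 := Iff.rfl

theorem mem_BB {i : Fin t} {f : Fin t → G} : f ∈ (BB i : Subgroup (Fin t → G)) ↔
    f i = 1 := Iff.rfl

theorem NN_normal (i : Fin t) : (NN i : Subgroup (Fin t → G)).Normal := by
  constructor
  intro f hf g j hj
  simp [Pi.mul_apply, Pi.inv_apply, hf j hj]

theorem BB_normal (i : Fin t) : (BB i : Subgroup (Fin t → G)).Normal :=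
  MonoidHom.normal_ker _

theorem mulSingle_mem_NN (i : Fin t) (g : G) : Pi.mulSingle i g ∈ (NN i : Subgroup (Fin t → G)) :=
  fun j hj => Pi.mulSingle_eq_of_ne (M := fun _ => G) hj g

theorem update_mem_BB (i : Fin t) (f : Fin t → G) :
    Function.update f i 1 ∈ (BB i : Subgroup (Fin t → G)) := by
  simp [mem_BB]

theorem decomp (i : Fin t) (f : Fin t → G) :
    f = Pi.mulSingle i (f i) * Function.update f i 1 := by
  funext j
  by_cases hj : j = i
  · subst hj; simp
  · simp [Pi.mulSingle_eq_of_ne hj, Function.update_of_ne hj]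

theorem NN_BB_comm {i : Fin t} {a b : Fin t → G}
    (ha : a ∈ (NN i : Subgroup (Fin t → G))) (hb : b ∈ (BB i : Subgroup (Fin t → G))) :
    a * b = b * a := by
  funext j
  by_cases hj : j = i
  · subst hj; simp [Pi.mul_apply, mem_BB.1 hb]
  · simp [Pi.mul_apply, ha j hj]

theorem NN_inf_BB (i : Fin t) : (NN i : Subgroup (Fin t → G)) ⊓ BB i = ⊥ := by
  rw [Subgroup.eq_bot_iff_forall]
  rintro f ⟨hf1, hf2⟩
  funext j
  by_cases hj : j = i
  · subst hj; exact mem_BB.1 hf2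
  · exact hf1 j hj

theorem NN_BB_decomp (i : Fin t) (f : Fin t → G) :
    ∃ a ∈ (NN i : Subgroup (Fin t → G)), ∃ b ∈ (BB i : Subgroup (Fin t → G)), f = a * b :=
  ⟨_, mulSingle_mem_NN i (f i), _, update_mem_BB i f, decomp i f⟩

theorem center_pi_eq_bot (hZ : Subgroup.center G = ⊥) :
    Subgroup.center (Fin t → G) = ⊥ := by
  rw [Subgroup.eq_bot_iff_forall]
  intro f hf
  funext j
  have : f j ∈ Subgroup.center G := by
    rw [Subgroup.mem_center_iff]
    intro g
    have := (Subgroup.mem_center_iff.1 hf) (Pi.mulSingle j g)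
    have := congrFun this j
    simpa [Pi.mul_apply] using this
  rw [hZ, Subgroup.mem_bot] at this
  exact this

theorem mulSingle_of_mem_NN {i : Fin t} {f : Fin t → G}
    (hf : f ∈ (NN i : Subgroup (Fin t → G))) : Pi.mulSingle i (f i) = f := by
  funext j
  by_cases hj : j = i
  · subst hj; simp
  · simp [Pi.mulSingle_eq_of_ne hj, hf j hj]

theorem NN_injective [Nontrivial G] {i i' : Fin t}
    (h : (NN i : Subgroup (Fin t → G)) = NN i') : i = i' := by
  by_contra hne
  obtain ⟨g₀, hg₀⟩ := exists_ne (1 : G)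
  have h1 : Pi.mulSingle i g₀ ∈ (NN i' : Subgroup (Fin t → G)) := h ▸ mulSingle_mem_NN i g₀
  have := h1 i (fun hc => hne (hc ▸ rfl))
  rw [Pi.mulSingle_eq_same] at this
  exact hg₀ this

/-- `BB i` is the centralizer of `NN i` when `G` is centerless. -/
theorem BB_eq_centralizer (hZ : Subgroup.center G = ⊥) (i : Fin t) :
    (BB i : Subgroup (Fin t → G)) = Subgroup.centralizer (NN i : Subgroup (Fin t → G)) := by
  ext f
  rw [Subgroup.mem_centralizer_iff]
  constructor
  · intro hf h hh
    exact (NN_BB_comm hh hf).symm ▸ NN_BB_comm hh hf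
  · intro hf
    rw [mem_BB]
    have : f i ∈ Subgroup.center G := by
      rw [Subgroup.mem_center_iff]
      intro g
      have := hf (Pi.mulSingle i g) (mulSingle_mem_NN i g)
      have := congrFun this i
      simpa [Pi.mul_apply] using this
    rw [hZ, Subgroup.mem_bot] at this
    exact this

/-- A normal subgroup meeting every coordinate subgroup trivially is trivial. -/
theorem eq_bot_of_inf_NN (hZ : Subgroup.center G = ⊥) {K : Subgroup (Fin t → G)}
    (hKn : K.Normal) (h : ∀ i, K ⊓ NN i = ⊥) : K = ⊥ := by
  rw [Subgroup.eq_bot_iff_forall]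
  intro k hk
  funext j
  have hcomm : ∀ g : G, g * k j = k j * g := by
    intro g
    set x : Fin t → G := Pi.mulSingle j g with hx
    have hmem : k * x * k⁻¹ * x⁻¹ ∈ K ⊓ NN j := by
      rw [Subgroup.mem_inf]
      constructor
      · have : k * (x * k⁻¹ * x⁻¹) ∈ K := mul_mem hk (by
          have := hKn.conj_mem k⁻¹ (inv_mem hk) x
          simpa [mul_assoc] using this)
        simpa [mul_assoc] using this
      · intro j' hj'
        have hx1 : x j' = 1 := Pi.mulSingle_eq_of_ne (M := fun _ => G) hj' g
        simp [Pi.mul_apply, Pi.inv_apply, hx1]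
    rw [h j, Subgroup.mem_bot] at hmem
    have := congrFun hmem j
    have hxj : x j = g := Pi.mulSingle_eq_same (M := fun _ => G) j g
    simp only [Pi.mul_apply, Pi.inv_apply, Pi.one_apply, hxj] at this
    calc g * k j = (k j * g * (k j)⁻¹ * g⁻¹) * (g * k j) := by rw [this]; group
      _ = k j * g := by group
  have : k j ∈ Subgroup.center G := Subgroup.mem_center_iff.2 hcomm
  rw [hZ, Subgroup.mem_bot] at this
  exact this

/-- `G` is isomorphic to each coordinate subgroup. -/
def mulSingleEquiv (i : Fin t) : G ≃* (NN i : Subgroup (Fin t → G)) where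
  toFun g := ⟨Pi.mulSingle i g, mulSingle_mem_NN i g⟩
  invFun f := (f : Fin t → G) i
  left_inv g := Pi.mulSingle_eq_same (M := fun _ => G) i g
  right_inv f := Subtype.ext (mulSingle_of_mem_NN f.2)
  map_mul' g g' := Subtype.ext (Pi.mulSingle_mul (f := fun _ => G) i g g')

end Pi

/-! ### Mapping subgroups under automorphisms -/

theorem map_centralizer {H H' : Type*} [Group H] [Group H'] (e : H ≃* H') (S : Set H) :
    (Subgroup.centralizer S).map e.toMonoidHom = Subgroup.centralizer (e '' S) := by
  ext x
  rw [Subgroup.mem_map]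
  constructor
  · rintro ⟨y, hy, rfl⟩
    rw [Subgroup.mem_centralizer_iff]
    rintro h' ⟨s, hs, rfl⟩
    show e s * e y = e y * e s
    rw [← map_mul, ← map_mul, Subgroup.mem_centralizer_iff.1 hy s hs]
  · intro hx
    refine ⟨e.symm x, ?_, e.apply_symm_apply x⟩
    rw [Subgroup.mem_centralizer_iff]
    intro s hs
    apply e.injective
    rw [map_mul, map_mul, e.apply_symm_apply]
    exact Subgroup.mem_centralizer_iff.1 hx (e s) ⟨s, hs, rfl⟩

section Structure

variable {G : Type u} [Group G] [Finite G] {t : ℕ}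

/-- **Structure step 1**: any automorphism of `Gᵗ` maps each coordinate subgroup onto a
coordinate subgroup. -/
theorem exists_NN_map (hZ : Subgroup.center G = ⊥) (hind : Indecomposable G)
    [Nontrivial G] (φ : MulAut (Fin t → G)) (i : Fin t) :
    ∃ j, (NN i : Subgroup (Fin t → G)).map φ.toMonoidHom = NN j := by
  have hZH : Subgroup.center (Fin t → G) = ⊥ := center_pi_eq_bot hZ
  set K : Subgroup (Fin t → G) := (NN i).map φ.toMonoidHom with hK
  set M : Subgroup (Fin t → G) := (BB i).map φ.toMonoidHom with hM
  have hKn : K.Normal := (NN_normal i).map _ φ.surjective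
  have hMn : M.Normal := (BB_normal i).map _ φ.surjective
  have hKM : K ⊓ M = ⊥ := by
    rw [hK, hM, ← Subgroup.map_inf _ _ _ φ.injective, NN_inf_BB, Subgroup.map_bot]
  have hKMd : ∀ h : Fin t → G, ∃ k ∈ K, ∃ m ∈ M, h = k * m := by
    intro h
    obtain ⟨a, ha, b, hb, hab⟩ := NN_BB_decomp i (φ.symm h)
    refine ⟨φ a, ⟨a, ha, rfl⟩, φ b, ⟨b, hb, rfl⟩, ?_⟩
    rw [← map_mul, ← hab, φ.apply_symm_apply]
  -- K is nontrivial, so it meets some coordinate subgroup nontrivially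
  obtain ⟨j, hj⟩ : ∃ j, K ⊓ NN j ≠ ⊥ := by
    by_contra hc
    push_neg at hc
    have hKbot : K = ⊥ := eq_bot_of_inf_NN hZ hKn hc
    obtain ⟨g₀, hg₀⟩ := exists_ne (1 : G)
    have h1 : φ (Pi.mulSingle i g₀) ∈ K := ⟨_, mulSingle_mem_NN i g₀, rfl⟩
    rw [hKbot, Subgroup.mem_bot] at h1
    have : Pi.mulSingle i g₀ = (1 : Fin t → G) := φ.injective (by simpa using h1)
    exact hg₀ (by simpa using congrFun this i)
  -- extract both pieces of any element of K relative to NN j and BB j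
  have hA : ∀ n ∈ K, Pi.mulSingle j (n j) ∈ K :=
    fun n hn => factor_piece hZH hKn hMn (fun a ha b hb => NN_BB_comm ha hb)
      (NN_BB_decomp j) hKM hKMd n hn _ (mulSingle_mem_NN j (n j)) _
      (update_mem_BB j n) (decomp j n)
  have hB : ∀ n ∈ K, Function.update n j 1 ∈ K := by
    intro n hn
    have hswapd : ∀ h : Fin t → G, ∃ a ∈ (BB j : Subgroup (Fin t → G)),
        ∃ b ∈ (NN j : Subgroup (Fin t → G)), h = a * b := by
      intro h
      obtain ⟨a, ha, b, hb, hab⟩ := NN_BB_decomp j h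
      exact ⟨b, hb, a, ha, by rw [hab, NN_BB_comm ha hb]⟩
    exact factor_piece hZH hKn hMn (fun a ha b hb => (NN_BB_comm hb ha).symm)
      hswapd hKM hKMd n hn _ (update_mem_BB j n) _ (mulSingle_mem_NN j (n j))
      ((decomp j n).trans (NN_BB_comm (mulSingle_mem_NN j (n j)) (update_mem_BB j n)))
  -- build the isomorphism K ≃ (K ⊓ NN j) × (K ⊓ BB j)
  let f₁ : ↥(K ⊓ NN j) →* ↥K := Subgroup.inclusion inf_le_left
  let f₂ : ↥(K ⊓ BB j) →* ↥K := Subgroup.inclusion inf_le_left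
  have hcomm : ∀ (x : ↥(K ⊓ NN j)) (y : ↥(K ⊓ BB j)), Commute (f₁ x) (f₂ y) := by
    intro x y
    have := NN_BB_comm x.2.2 y.2.2
    exact Subtype.ext this
  let e0 : ↥(K ⊓ NN j) × ↥(K ⊓ BB j) →* ↥K := MonoidHom.noncommCoprod f₁ f₂ hcomm
  have he0inj : Function.Injective e0 := by
    rw [injective_iff_map_eq_one]
    rintro ⟨x, y⟩ hxy
    have hval : (x : Fin t → G) * y = 1 := congrArg Subtype.val hxy
    have hx : (x : Fin t → G) ∈ NN j ⊓ BB j := by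
      rw [Subgroup.mem_inf]
      constructor
      · exact x.2.2
      · have : (x : Fin t → G) = (y : Fin t → G)⁻¹ := by
          rw [eq_inv_iff_mul_eq_one]; exact hval
        rw [this]
        exact inv_mem y.2.2
    rw [NN_inf_BB, Subgroup.mem_bot] at hx
    have hy : (y : Fin t → G) = 1 := by
      have := hval
      rw [hx, one_mul] at this
      exact this
    refine Prod.ext ?_ ?_
    · exact Subtype.ext (by exact_mod_cast hx)
    · exact Subtype.ext (by exact_mod_cast hy)
  have he0surj : Function.Surjective e0 := by
    rintro ⟨n, hn⟩
    refine ⟨⟨⟨Pi.mulSingle j (n j), hA n hn, mulSingle_mem_NN j (n j)⟩,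
      ⟨Function.update n j 1, hB n hn, update_mem_BB j n⟩⟩, ?_⟩
    exact Subtype.ext (decomp j n).symm
  let e : ↥(K ⊓ NN j) × ↥(K ⊓ BB j) ≃* ↥K := MulEquiv.ofBijective e0 ⟨he0inj, he0surj⟩
  let Giso : G ≃* ↥K := (mulSingleEquiv i).trans (MulEquiv.subgroupMap φ (NN i))
  have := hind ↥(K ⊓ NN j) ↥(K ⊓ BB j) inferInstance inferInstance ⟨Giso.trans e.symm⟩
  rcases this with hs | hs
  · -- K ⊓ NN j is subsingleton, contradicting hj
    exfalso
    apply hj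
    rw [Subgroup.eq_bot_iff_forall]
    intro x hx
    exact congrArg Subtype.val (hs.elim (⟨x, hx⟩ : ↥(K ⊓ NN j)) 1)
  · -- K ⊓ BB j is trivial, so K = NN j
    have hbot : K ⊓ BB j = ⊥ := by
      rw [Subgroup.eq_bot_iff_forall]
      intro x hx
      exact congrArg Subtype.val (hs.elim (⟨x, hx⟩ : ↥(K ⊓ BB j)) 1)
    have hle : K ≤ NN j := by
      intro n hn
      have h1 : Function.update n j 1 ∈ K ⊓ BB j := ⟨hB n hn, update_mem_BB j n⟩
      rw [hbot, Subgroup.mem_bot] at h1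
      have : n = Pi.mulSingle j (n j) := by
        conv_lhs => rw [decomp j n]
        rw [h1, mul_one]
      rw [this]
      exact mulSingle_mem_NN j (n j)
    refine ⟨j, Subgroup.eq_of_le_of_card_ge hle ?_⟩
    have c1 : Nat.card ↥K = Nat.card G := Nat.card_congr Giso.symm.toEquiv
    have c2 : Nat.card ↥(NN j : Subgroup (Fin t → G)) = Nat.card G :=
      Nat.card_congr (mulSingleEquiv j).symm.toEquiv
    rw [c1, c2]

end Structure

/-! ### The wreath product and the homomorphism to `Aut(Gᵗ)` -/

section Wreath

variable {X : Type*} [Group X] {t : ℕ}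

/-- Reindexing automorphism of a power. -/
def permEquiv (σ : Equiv.Perm (Fin t)) : (Fin t → X) ≃* (Fin t → X) where
  toFun f := fun j => f (σ.symm j)
  invFun f := fun j => f (σ j)
  left_inv f := funext fun j => by simp
  right_inv f := funext fun j => by simp
  map_mul' f g := rfl

@[simp] theorem permEquiv_apply (σ : Equiv.Perm (Fin t)) (f : Fin t → X) (j : Fin t) :
    permEquiv σ f j = f (σ.symm j) := rfl

/-- Reindexing as a homomorphism into the automorphism group. -/
def permHom : Equiv.Perm (Fin t) →* MulAut (Fin t → X) where
  toFun := permEquiv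
  map_one' := by ext f; rfl
  map_mul' σ τ := by ext f; rfl

/-- Componentwise automorphisms of a power. -/
def compHom : (Fin t → MulAut X) →* MulAut (Fin t → X) where
  toFun ψ := MulEquiv.piCongrRight ψ
  map_one' := by ext f; rfl
  map_mul' ψ χ := by ext f; rfl

@[simp] theorem compHom_apply (ψ : Fin t → MulAut X) (f : Fin t → X) (j : Fin t) :
    compHom ψ f j = ψ j (f j) := rfl

@[simp] theorem permHom_apply (σ : Equiv.Perm (Fin t)) (f : Fin t → X) (j : Fin t) :
    (permHom σ : MulAut (Fin t → X)) f j = f (σ.symm j) := rfl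

theorem wreath_compat (σ : Equiv.Perm (Fin t)) :
    (compHom : (Fin t → MulAut X) →* MulAut (Fin t → X)).comp
        ((permHom σ : MulAut (Fin t → MulAut X))).toMonoidHom =
      (MulAut.conj ((permHom σ : MulAut (Fin t → X)))).toMonoidHom.comp compHom := by
  refine MonoidHom.ext fun ψ => ?_
  refine MulEquiv.ext fun f => ?_
  funext j
  show ψ (σ.symm j) (f j) = (MulAut.conj (permHom σ) (compHom ψ)) f j
  rw [MulAut.conj_apply, MulAut.mul_apply, MulAut.mul_apply]
  rw [permHom_apply, compHom_apply]
  have hinv : (((permHom σ : MulAut (Fin t → X)))⁻¹ f) (σ.symm j) = f (σ (σ.symm j)) := rfl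
  rw [hinv, Equiv.apply_symm_apply]

variable (X t) in
/-- The wreath product `(Aut X)ᵗ ⋊ Sₜ`. -/
abbrev Wr : Type _ := SemidirectProduct (Fin t → MulAut X) (Equiv.Perm (Fin t)) permHom

variable (X t) in
/-- The natural homomorphism from the wreath product to `Aut(Xᵗ)`. -/
def Phi : Wr X t →* MulAut (Fin t → X) :=
  SemidirectProduct.lift compHom permHom wreath_compat

theorem Phi_apply (w : Wr X t) (f : Fin t → X) (j : Fin t) :
    Phi X t w f j = w.left j (f (w.right.symm j)) := rfl

theorem map_permEquiv_NN {G : Type u} [Group G] (σ : Equiv.Perm (Fin t)) (k : Fin t) :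
    (NN k : Subgroup (Fin t → G)).map (permEquiv σ).toMonoidHom = NN (σ k) := by
  ext f
  rw [Subgroup.mem_map]
  constructor
  · rintro ⟨g, hg, rfl⟩
    intro j hj
    show g (σ.symm j) = 1
    refine hg _ (fun hc => hj ?_)
    rw [← hc, Equiv.apply_symm_apply]
  · intro hf
    refine ⟨fun j => f (σ j), fun j hj => hf (σ j) (fun hc => hj (σ.injective hc)), ?_⟩
    funext j
    simp

end Wreath

section Surj

variable {G : Type u} [Group G] [Finite G] {t : ℕ}

theorem Phi_bijective (hZ : Subgroup.center G = ⊥) (hind : Indecomposable G)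
    [Nontrivial G] : Function.Bijective (Phi G t) := by
  constructor
  · rw [injective_iff_map_eq_one]
    rintro ⟨ψ, σ⟩ hw
    obtain ⟨g₀, hg₀⟩ := exists_ne (1 : G)
    have happ : ∀ (f : Fin t → G) (j : Fin t), ψ j (f (σ.symm j)) = f j := by
      intro f j
      have := congrFun (congrArg (fun (e : MulAut (Fin t → G)) => e f) hw) j
      simpa [Phi_apply, Equiv.Perm.one_symm] using this
    have hσ : ∀ j, σ.symm j = j := by
      intro j
      by_contra hc
      have := happ (Pi.mulSingle (σ.symm j) g₀) j
      rw [Pi.mulSingle_eq_same (M := fun _ => G),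
        Pi.mulSingle_eq_of_ne (M := fun _ => G) (fun h => hc h.symm) g₀] at this
      exact hg₀ ((ψ j).injective (by simpa using this) )
    have hσ1 : σ = 1 := by
      have : σ.symm = 1 := Equiv.ext hσ
      calc σ = σ.symm.symm := rfl
        _ = 1 := by rw [this]; rfl
    have hψ1 : ψ = 1 := by
      funext j
      ext g
      have := happ (Pi.mulSingle j g) j
      rw [hσ1] at this
      simpa [Equiv.Perm.one_symm] using this
    show (⟨ψ, σ⟩ : Wr G t) = ⟨1, 1⟩
    rw [hσ1, hψ1]
  · intro φ
    -- choose the permutation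
    have hex : ∀ i, ∃ j, (NN i : Subgroup (Fin t → G)).map φ.toMonoidHom = NN j :=
      exists_NN_map hZ hind φ
    choose σf hσf using hex
    have hinj : Function.Injective σf := by
      intro i i' h
      apply NN_injective (G := G)
      apply Subgroup.map_injective (f := φ.toMonoidHom) φ.injective
      rw [hσf i, hσf i', h]
    have hbij : Function.Bijective σf := Finite.injective_iff_bijective.1 hinj
    let σp : Equiv.Perm (Fin t) := Equiv.ofBijective σf hbij
    let φ' : MulAut (Fin t → G) := (permHom σp)⁻¹ * φ
    have hcomp : φ'.toMonoidHom =
        ((permHom σp)⁻¹ : MulAut (Fin t → G)).toMonoidHom.comp φ.toMonoidHom := rfl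
    have h1 : ∀ i, (NN i : Subgroup (Fin t → G)).map φ'.toMonoidHom = NN i := by
      intro i
      rw [hcomp, ← Subgroup.map_map, hσf i]
      have : ((permHom σp)⁻¹ : MulAut (Fin t → G)) = permEquiv σp⁻¹ := by
        rw [← map_inv]; rfl
      rw [this, map_permEquiv_NN]
      congr 1
      show σp⁻¹ (σf i) = i
      exact σp.symm_apply_apply i
    have h1' : ∀ i, (NN i : Subgroup (Fin t → G)).map φ'.symm.toMonoidHom = NN i := by
      intro i
      have := congrArg (Subgroup.map φ'.symm.toMonoidHom) (h1 i)
      rw [Subgroup.map_map] at this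
      have hid : φ'.symm.toMonoidHom.comp φ'.toMonoidHom = MonoidHom.id _ :=
        MonoidHom.ext fun x => φ'.symm_apply_apply x
      rw [hid, Subgroup.map_id] at this
      exact this.symm
    have h2 : ∀ i, (BB i : Subgroup (Fin t → G)).map φ'.toMonoidHom = BB i := by
      intro i
      rw [BB_eq_centralizer hZ i, map_centralizer φ' ((NN i : Subgroup (Fin t → G)) : Set _)]
      congr 1
      have := h1 i
      calc (φ' '' ((NN i : Subgroup (Fin t → G)) : Set (Fin t → G)))
          = (((NN i : Subgroup (Fin t → G)).map φ'.toMonoidHom : Subgroup (Fin t → G)) :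
              Set (Fin t → G)) := rfl
        _ = ((NN i : Subgroup (Fin t → G)) : Set (Fin t → G)) := by rw [h1 i]
    -- the componentwise automorphisms
    have hmemNN : ∀ (j : Fin t) (g : G), φ' (Pi.mulSingle j g) ∈ (NN j : Subgroup (Fin t → G)) :=
      fun j g => (h1 j) ▸ ⟨_, mulSingle_mem_NN j g, rfl⟩
    have hmemNN' : ∀ (j : Fin t) (g : G),
        φ'.symm (Pi.mulSingle j g) ∈ (NN j : Subgroup (Fin t → G)) :=
      fun j g => (h1' j) ▸ ⟨_, mulSingle_mem_NN j g, rfl⟩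
    let ψd : Fin t → MulAut G := fun j =>
      { toFun := fun g => φ' (Pi.mulSingle j g) j
        invFun := fun g => φ'.symm (Pi.mulSingle j g) j
        left_inv := by
          intro g
          show φ'.symm (Pi.mulSingle j (φ' (Pi.mulSingle j g) j)) j = g
          rw [mulSingle_of_mem_NN (hmemNN j g), φ'.symm_apply_apply,
            Pi.mulSingle_eq_same (M := fun _ => G)]
        right_inv := by
          intro g
          show φ' (Pi.mulSingle j (φ'.symm (Pi.mulSingle j g) j)) j = g
          rw [mulSingle_of_mem_NN (hmemNN' j g), φ'.apply_symm_apply,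
            Pi.mulSingle_eq_same (M := fun _ => G)]
        map_mul' := by
          intro g g'
          show φ' (Pi.mulSingle j (g * g')) j = φ' (Pi.mulSingle j g) j * φ' (Pi.mulSingle j g') j
          rw [Pi.mulSingle_mul (f := fun _ => G), map_mul, Pi.mul_apply] }
    have hφ' : φ' = compHom ψd := by
      refine MulEquiv.ext fun f => funext fun j => ?_
      have hd := decomp j f
      have : φ' f = φ' (Pi.mulSingle j (f j)) * φ' (Function.update f j 1) := by
        conv_lhs => rw [hd]
        rw [map_mul]
      rw [this, Pi.mul_apply]
      have hu : φ' (Function.update f j 1) ∈ (BB j : Subgroup (Fin t → G)) :=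
        (h2 j) ▸ ⟨_, update_mem_BB j f, rfl⟩
      rw [mem_BB.1 hu, mul_one]
      rfl
    refine ⟨SemidirectProduct.inr σp * SemidirectProduct.inl ψd, ?_⟩
    unfold Phi
    rw [map_mul, SemidirectProduct.lift_inr, SemidirectProduct.lift_inl]
    show (permHom σp : MulAut (Fin t → G)) * compHom ψd = φ
    rw [← hφ']
    show (permHom σp : MulAut (Fin t → G)) * ((permHom σp)⁻¹ * φ) = φ
    group

end Surj

/-! ### Assembling the section for `Aut(Gᵗ)` -/

section Assemble

variable {G : Type u} [Group G] [Finite G] {t : ℕ}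

theorem Phi_inl_conj (c : Fin t → G) :
    Phi G t (SemidirectProduct.inl (fun j => MulAut.conj (c j))) = MulAut.conj c := by
  refine MulEquiv.ext fun f => funext fun j => ?_
  show MulAut.conj (c j) (f j) = MulAut.conj c f j
  rw [MulAut.conj_apply, MulAut.conj_apply]
  rfl

theorem main_section [Nontrivial G]
    (hZ : Subgroup.center G = ⊥) (hind : Indecomposable G)
    (s : (MulAut G ⧸ Inn G) →* MulAut G)
    (hs : (QuotientGroup.mk' (Inn G)).comp s = MonoidHom.id _) :
    ∃ sec : (MulAut (Fin t → G) ⧸ Inn (Fin t → G)) →* MulAut (Fin t → G),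
      (QuotientGroup.mk' (Inn (Fin t → G))).comp sec =
        MonoidHom.id (MulAut (Fin t → G) ⧸ Inn (Fin t → G)) := by
  classical
  set r : MulAut G →* MulAut G := s.comp (QuotientGroup.mk' (Inn G)) with hr
  have hr1 : ∀ x ∈ Inn G, r x = 1 := by
    intro x hx
    have hker : x ∈ (QuotientGroup.mk' (Inn G)).ker := by
      rw [QuotientGroup.ker_mk']; exact hx
    show s (QuotientGroup.mk' (Inn G) x) = 1
    rw [MonoidHom.mem_ker.1 hker, map_one]
  have hr2 : ∀ x : MulAut G, QuotientGroup.mk' (Inn G) (r x) = QuotientGroup.mk' (Inn G) x := by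
    intro x
    show (QuotientGroup.mk' (Inn G)).comp s (QuotientGroup.mk' (Inn G) x) = _
    rw [hs]; rfl
  -- the section on the wreath product side
  let sW : Wr G t →* Wr G t := MonoidHom.mk'
    (fun w => ⟨fun j => r (w.left j), w.right⟩) (by
      intro w w'
      refine SemidirectProduct.ext ?_ ?_
      · funext j
        show r (w.left j * w'.left (w.right.symm j)) =
          r (w.left j) * r (w'.left (w.right.symm j))
        rw [map_mul]
      · rfl)
  have hsW_left : ∀ w : Wr G t, (sW w).left = fun j => r (w.left j) := fun _ => rfl
  have hsW_right : ∀ w : Wr G t, (sW w).right = w.right := fun _ => rfl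
  let Ψ : Wr G t ≃* MulAut (Fin t → G) :=
    MulEquiv.ofBijective (Phi G t) (Phi_bijective hZ hind)
  have hΨ : ∀ w : Wr G t, Ψ w = Phi G t w := fun _ => rfl
  let sbar : MulAut (Fin t → G) →* MulAut (Fin t → G) :=
    Ψ.toMonoidHom.comp (sW.comp Ψ.symm.toMonoidHom)
  have hsbar : ∀ x, sbar x = Ψ (sW (Ψ.symm x)) := fun _ => rfl
  -- sbar kills inner automorphisms
  have hkill : ∀ x ∈ Inn (Fin t → G), sbar x = 1 := by
    rintro x ⟨c, rfl⟩
    have h1 : Ψ (SemidirectProduct.inl (fun j => MulAut.conj (c j))) = MulAut.conj c :=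
      Phi_inl_conj c
    have h2 : Ψ.symm (MulAut.conj c) = SemidirectProduct.inl (fun j => MulAut.conj (c j)) :=
      Ψ.symm_apply_eq.mpr h1.symm
    rw [hsbar, h2]
    have h3 : sW (SemidirectProduct.inl (fun j => MulAut.conj (c j))) = 1 := by
      refine SemidirectProduct.ext ?_ ?_
      · funext j
        show r (MulAut.conj (c j)) = 1
        exact hr1 _ ⟨c j, rfl⟩
      · rfl
    rw [h3, map_one]
  -- sbar is congruent to the identity mod inner automorphisms
  have hcong : ∀ x : MulAut (Fin t → G),
      QuotientGroup.mk' (Inn (Fin t → G)) (sbar x) = QuotientGroup.mk' (Inn (Fin t → G)) x := by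
    intro x
    set w : Wr G t := Ψ.symm x with hw
    set χ : Fin t → MulAut G := fun j => (w.left (w.right j))⁻¹ * r (w.left (w.right j)) with hχ
    have hχmem : ∀ j, χ j ∈ Inn G := by
      intro j
      have : QuotientGroup.mk' (Inn G) (χ j) = 1 := by
        rw [hχ]
        simp only [map_mul, map_inv, hr2]
        group
      rw [← QuotientGroup.ker_mk' (Inn G)]
      exact MonoidHom.mem_ker.2 this
    have hcex : ∀ j, ∃ g : G, MulAut.conj g = χ j := fun j => hχmem j
    choose c hc using hcex
    have hsw : sW w = w * SemidirectProduct.inl χ := by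
      refine SemidirectProduct.ext ?_ ?_
      · funext j
        show r (w.left j) = w.left j * χ (w.right.symm j)
        have : χ (w.right.symm j) = (w.left j)⁻¹ * r (w.left j) := by
          rw [hχ]
          simp only [Equiv.apply_symm_apply]
        rw [this, mul_inv_cancel_left]
      · show w.right = w.right * 1
        rw [mul_one]
    have hfinal : sbar x = x * MulAut.conj c := by
      rw [hsbar, ← hw, hsw, map_mul]
      congr 1
      · exact Ψ.apply_symm_apply x
      · have : χ = fun j => MulAut.conj (c j) := funext fun j => (hc j).symm
        rw [this]
        exact Phi_inl_conj c
    rw [hfinal, map_mul]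
    have : QuotientGroup.mk' (Inn (Fin t → G)) (MulAut.conj c) = 1 := by
      have hker : MulAut.conj c ∈ (QuotientGroup.mk' (Inn (Fin t → G))).ker := by
        rw [QuotientGroup.ker_mk']; exact ⟨c, rfl⟩
      exact MonoidHom.mem_ker.1 hker
    rw [this, mul_one]
  -- the section
  refine ⟨QuotientGroup.lift (Inn (Fin t → G)) sbar
    (fun x hx => MonoidHom.mem_ker.2 (hkill x hx)), ?_⟩
  refine MonoidHom.ext fun x => ?_
  refine QuotientGroup.induction_on x ?_
  intro φ
  show QuotientGroup.mk' (Inn (Fin t → G))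
      (QuotientGroup.lift (Inn (Fin t → G)) sbar _ ((QuotientGroup.mk (s := Inn (Fin t → G))) φ)) =
    QuotientGroup.mk (s := Inn (Fin t → G)) φ
  rw [QuotientGroup.lift_mk']
  exact hcong φ

end Assemble

end AC3

theorem statement3 (G : Type u) [Group G] [Finite G]
    (hac : AlmostComplete G) (hind : Indecomposable G) (t : ℕ) (ht : 0 < t) :
    AlmostComplete (Fin t → G) := by
  obtain ⟨hZ, s, hs⟩ := hac
  refine ⟨AC3.center_pi_eq_bot hZ, ?_⟩
  rcases subsingleton_or_nontrivial G with hG | hG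
  · have h1 : Subsingleton (Fin t → G) := ⟨fun a b => funext fun j => Subsingleton.elim _ _⟩
    have h2 : Subsingleton (MulAut (Fin t → G)) :=
      ⟨fun a b => MulEquiv.ext fun x => Subsingleton.elim _ _⟩
    have h3 : Subsingleton (MulAut (Fin t → G) ⧸ Inn (Fin t → G)) := by
      constructor
      intro a b
      obtain ⟨x, rfl⟩ := QuotientGroup.mk'_surjective (Inn (Fin t → G)) a
      obtain ⟨y, rfl⟩ := QuotientGroup.mk'_surjective (Inn (Fin t → G)) b
      rw [Subsingleton.elim x y]
    exact ⟨1, MonoidHom.ext fun x => Subsingleton.elim _ _⟩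
  · exact AC3.main_section hZ hind s hs
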